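/- Let F be a contravariant functor from subsets of the finite set I to polyhedra in ℝʳ (each value a finite intersection of closed half-spaces, possibly empty) whose evaluation subcomplexes C^F_•(m) are exact for every m ∈ ℝʳ, and let C ⊆ ℝʳ be the convex cone generated with nonnegative real coefficients by a finite set of vectors. Then the contravariant functor F^C defined by F^C(I') := F(I') + C (Minkowski sum) has exact evaluation subcomplexes C^{F^C}_•(m) for every m ∈ ℝʳ. -/

import Mathlib

set_option linter.unusedSectionVars false
set_option maxHeartbeats 1000000


open Pointwise

noncomputable section

variable {I : Type*} [Fintype I] [LinearOrder I]

/-- The basis vector `e_J` of the Koszul complex `⋀^• ℂ^I`, indexed by the subset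
`J = {i_0 < ⋯ < i_{p-1}} ⊆ I`.  The total space of the Koszul complex is modelled as
`Finset I → ℂ`, with `⋀^p ℂ^I` the span of the `e_J` with `J.card = p`. -/
def eVec (J : Finset I) : Finset I → ℂ := fun K => if K = J then 1 else 0

/-- The Koszul differential: `d (e_{I'}) = ∑_j (-1)^j e_{I' \ {i_j}}` for
`I' = {i_0 < ⋯ < i_p}`. -/
def koszulD : (Finset I → ℂ) →ₗ[ℂ] (Finset I → ℂ) where
  toFun f := fun J => ∑ i ∈ Jᶜ, (-1 : ℂ) ^ (J.filter (· < i)).card * f (insert i J)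
  map_add' f g := by
    funext J
    simp [mul_add, Finset.sum_add_distrib]
  map_smul' c f := by
    funext J
    simp only [Pi.smul_apply, smul_eq_mul, RingHom.id_apply, Finset.mul_sum]
    exact Finset.sum_congr rfl fun i _ => by ring

/-- The degree-`p` part of the evaluation subcomplex `C^F_•(m)`:
the span of the `e_{I'}` with `#I' = p` and `m ∈ F(I')`. -/
def evalC {α : Type*} (F : Finset I → Set α) (m : α) (p : ℕ) :
    Submodule ℂ (Finset I → ℂ) :=
  Submodule.span ℂ {v | ∃ J : Finset I, J.card = p ∧ m ∈ F J ∧ v = eVec J}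

/-- Exactness of the evaluation subcomplex `C^F_•(m)`: its homology vanishes in every
degree `p ≥ 0`. -/
def evalExact {α : Type*} (F : Finset I → Set α) (m : α) : Prop :=
  ∀ p : ℕ, ∀ x ∈ evalC F m p, koszulD x = 0 →
    ∃ y ∈ evalC F m (p + 1), koszulD y = x

/-- A polyhedron in `ℝʳ`: a finite intersection of closed half-spaces
`{x : ⟨x, v⟩ ≥ c}` (in particular `ℝʳ` and `∅` are polyhedra). -/
def IsPolyhedron {r : ℕ} (A : Set (Fin r → ℝ)) : Prop :=
  ∃ H : Finset ((Fin r → ℝ) × ℝ), A = {x | ∀ h ∈ H, h.2 ≤ ∑ k, x k * h.1 k}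

/-- The convex cone generated with nonnegative real coefficients by the finite set `G`
of vectors of `ℝʳ`. -/
def realCone {r : ℕ} (G : Finset (Fin r → ℝ)) : Set (Fin r → ℝ) :=
  {x | ∃ c : (Fin r → ℝ) → ℝ, (∀ g, 0 ≤ c g) ∧ x = ∑ g ∈ G, c g • g}

-- ## Part 1 : support characterization

def memC (S : Finset I → Prop) (p : ℕ) (x : Finset I → ℂ) : Prop :=
  ∀ J, x J ≠ 0 → J.card = p ∧ S J

lemma koszulD_apply (x : Finset I → ℂ) (J : Finset I) :
    koszulD x J = ∑ i ∈ Jᶜ, (-1 : ℂ) ^ (J.filter (· < i)).card * x (insert i J) := rfl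

lemma sum_eVec (x : Finset I → ℂ) : x = ∑ J : Finset I, x J • eVec J := by
  funext K
  simp only [Finset.sum_apply, Pi.smul_apply, eVec, smul_eq_mul]
  rw [Finset.sum_eq_single K]
  · simp
  · intro J _ hJ
    simp [Ne.symm hJ]
  · simp

lemma mem_evalC {α : Type*} {F : Finset I → Set α} {m : α} {p : ℕ} {x : Finset I → ℂ} :
    x ∈ evalC F m p ↔ memC (fun J => m ∈ F J) p x := by
  constructor
  · intro hx
    refine Submodule.span_induction ?_ ?_ ?_ ?_ hx
    · rintro v ⟨J, hc, hm, rfl⟩ K hK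
      have : K = J := by
        by_contra h
        simp [eVec, h] at hK
      subst this; exact ⟨hc, hm⟩
    · intro J hJ; simp at hJ
    · intro a b _ _ ha hb J hJ
      by_cases h : a J ≠ 0
      · exact ha J h
      · push_neg at h
        exact hb J (by simpa [Pi.add_apply, h] using hJ)
    · intro c a _ ha J hJ
      exact ha J fun h => hJ (by simp [h])
  · intro hx
    rw [sum_eVec x]
    refine Submodule.sum_mem _ fun J _ => ?_
    by_cases h : x J = 0
    · simp [h]
    · exact Submodule.smul_mem _ _ (Submodule.subset_span ⟨J, (hx J h).1, (hx J h).2, rfl⟩)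

def ExactFam (S : Finset I → Prop) : Prop :=
  ∀ p : ℕ, ∀ x, memC S p x → koszulD x = 0 →
    ∃ y, memC S (p + 1) y ∧ koszulD y = x

lemma evalExact_iff {α : Type*} {F : Finset I → Set α} {m : α} :
    evalExact F m ↔ ExactFam (fun J => m ∈ F J) := by
  constructor
  · intro h p x hx hdx
    obtain ⟨y, hy, hdy⟩ := h p x (mem_evalC.2 hx) hdx
    exact ⟨y, mem_evalC.1 hy, hdy⟩
  · intro h p x hx hdx
    obtain ⟨y, hy, hdy⟩ := h p x (mem_evalC.1 hx) hdx
    exact ⟨y, mem_evalC.2 hy, hdy⟩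

lemma ExactFam_congr {S S' : Finset I → Prop} (h : ∀ J, S J ↔ S' J) :
    ExactFam S → ExactFam S' := by
  intro he p x hx hdx
  obtain ⟨y, hy, hdy⟩ := he p x (fun J hJ => ⟨(hx J hJ).1, (h J).2 (hx J hJ).2⟩) hdx
  exact ⟨y, fun J hJ => ⟨(hy J hJ).1, (h J).1 (hy J hJ).2⟩, hdy⟩

lemma ExactFam_empty : ExactFam (fun _ : Finset I => False) := by
  intro p x hx _
  have hx0 : x = 0 := by
    funext J
    by_contra h
    exact (hx J h).2
  exact ⟨0, fun J hJ => absurd rfl hJ, by simp [hx0]⟩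

def DownClosed (S : Finset I → Prop) : Prop := ∀ ⦃J K : Finset I⦄, J ⊆ K → S K → S J

lemma koszulD_support {x : Finset I → ℂ} {K : Finset I} (h : koszulD x K ≠ 0) :
    ∃ i ∉ K, x (insert i K) ≠ 0 := by
  by_contra hc
  push_neg at hc
  refine h ?_
  rw [koszulD_apply]
  refine Finset.sum_eq_zero fun i hi => ?_
  rw [hc i (Finset.mem_compl.1 hi), mul_zero]

lemma koszulD_memC_zero {S : Finset I → Prop} {x : Finset I → ℂ} (hx : memC S 0 x) :
    koszulD x = 0 := by
  funext K
  rw [koszulD_apply]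
  refine Finset.sum_eq_zero fun i hi => ?_
  have : x (insert i K) = 0 := by
    by_contra h
    have := (hx _ h).1
    simp [Finset.card_insert_of_notMem (Finset.mem_compl.1 hi)] at this
  rw [this, mul_zero]

lemma koszulD_memC {S : Finset I → Prop} (hS : DownClosed S) {p : ℕ} {x : Finset I → ℂ}
    (hx : memC S (p + 1) x) : memC S p (koszulD x) := by
  intro K hK
  obtain ⟨i, hi, hxi⟩ := koszulD_support hK
  obtain ⟨hc, hs⟩ := hx _ hxi
  rw [Finset.card_insert_of_notMem hi] at hc
  exact ⟨Nat.succ_injective hc, hS (Finset.subset_insert i K) hs⟩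

lemma memC_neg {S : Finset I → Prop} {p : ℕ} {x : Finset I → ℂ} (hx : memC S p x) :
    memC S p (-x) := fun J hJ => hx J (by simpa using hJ)

lemma antisym_sum {ι : Type*} [DecidableEq ι] (s : Finset ι) (g : ι → ι → ℂ)
    (h : ∀ i ∈ s, ∀ j ∈ s, i ≠ j → g i j = -g j i) :
    ∑ i ∈ s, ∑ j ∈ s.erase i, g i j = 0 := by
  classical
  set h' : ι → ι → ℂ := fun i j => if i = j then 0 else g i j with hh'
  have key : ∀ i ∈ s, ∑ j ∈ s.erase i, g i j = ∑ j ∈ s, h' i j := by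
    intro i hi
    rw [← Finset.add_sum_erase s (h' i) hi]
    simp only [hh', if_pos rfl, zero_add]
    exact Finset.sum_congr rfl fun j hj => by
      simp [hh', Ne.symm (Finset.ne_of_mem_erase hj)]
  rw [Finset.sum_congr rfl key]
  have hanti : ∀ i ∈ s, ∀ j ∈ s, h' i j = -h' j i := by
    intro i hi j hj
    by_cases hij : i = j
    · simp [hh', hij]
    · simp only [hh', if_neg hij, if_neg (Ne.symm hij)]
      exact h i hi j hj hij
  have : (∑ i ∈ s, ∑ j ∈ s, h' i j) = -∑ i ∈ s, ∑ j ∈ s, h' i j := by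
    conv_lhs => rw [Finset.sum_comm]
    rw [← Finset.sum_neg_distrib]
    refine Finset.sum_congr rfl fun j hj => ?_
    rw [← Finset.sum_neg_distrib]
    exact Finset.sum_congr rfl fun i hi => hanti i hi j hj
  have h2 : (2 : ℂ) * ∑ i ∈ s, ∑ j ∈ s, h' i j = 0 := by linear_combination this
  have := mul_eq_zero.1 h2
  simpa using this

lemma koszulD_koszulD (x : Finset I → ℂ) : koszulD (koszulD x) = 0 := by
  funext J
  rw [koszulD_apply]
  simp only [koszulD_apply]
  have hrw : ∀ i ∈ Jᶜ,
      (-1 : ℂ) ^ (J.filter (· < i)).card *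
        ∑ i' ∈ (insert i J)ᶜ, (-1 : ℂ) ^ ((insert i J).filter (· < i')).card * x (insert i' (insert i J))
      = ∑ i' ∈ Jᶜ.erase i,
          (-1 : ℂ) ^ (J.filter (· < i)).card * ((-1 : ℂ) ^ ((insert i J).filter (· < i')).card * x (insert i' (insert i J))) := by
    intro i hi
    rw [Finset.mul_sum, Finset.compl_insert]
  rw [Finset.sum_congr rfl hrw]
  rw [Pi.zero_apply]
  refine antisym_sum _ _ ?_
  intro i hi j hj hij
  have hiJ : i ∉ J := Finset.mem_compl.1 hi
  have hjJ : j ∉ J := Finset.mem_compl.1 hj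
  have key : ∀ a b : I, a ∉ J → b ∉ J → a < b →
      (-1 : ℂ) ^ (J.filter (· < a)).card * ((-1 : ℂ) ^ ((insert a J).filter (· < b)).card * x (insert b (insert a J)))
      = -((-1 : ℂ) ^ (J.filter (· < b)).card * ((-1 : ℂ) ^ ((insert b J).filter (· < a)).card * x (insert a (insert b J)))) := by
    intro a b haJ hbJ hab
    have h1 : (insert a J).filter (· < b) = insert a (J.filter (· < b)) := by
      rw [Finset.filter_insert, if_pos hab]
    have h2 : (insert b J).filter (· < a) = J.filter (· < a) := by
      rw [Finset.filter_insert, if_neg (not_lt.2 hab.le)]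
    have h3 : insert b (insert a J) = insert a (insert b J) := Finset.insert_comm _ _ _
    rw [h1, h2, h3, Finset.card_insert_of_notMem (fun hmem => haJ (Finset.mem_filter.1 hmem).1)]
    ring
  rcases lt_or_gt_of_ne hij with h | h
  · exact key i j hiJ hjJ h
  · rw [key j i hjJ hiJ h]; ring

lemma memC_mono {S S' : Finset I → Prop} (h : ∀ J, S J → S' J) {p x} :
    memC S p x → memC S' p x := fun hx J hJ => ⟨(hx J hJ).1, h J (hx J hJ).2⟩

lemma memC_add {S : Finset I → Prop} {p : ℕ} {x y : Finset I → ℂ}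
    (hx : memC S p x) (hy : memC S p y) : memC S p (x + y) := by
  intro J hJ
  by_cases h : x J ≠ 0
  · exact hx J h
  · push_neg at h
    exact hy J (by simpa [Pi.add_apply, h] using hJ)

lemma memC_sub {S : Finset I → Prop} {p : ℕ} {x y : Finset I → ℂ}
    (hx : memC S p x) (hy : memC S p y) : memC S p (x - y) := by
  rw [sub_eq_add_neg]
  exact memC_add hx (fun J hJ => hy J (by simpa using hJ))

lemma mayer_vietoris {U V : Finset I → Prop} (hU : DownClosed U) (hV : DownClosed V)
    (heU : ExactFam U) (heV : ExactFam V) (heI : ExactFam (fun J => U J ∧ V J)) :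
    ExactFam (fun J => U J ∨ V J) := by
  classical
  intro p x hx hdx
  set u : Finset I → ℂ := fun J => if U J then x J else 0 with hu
  set v : Finset I → ℂ := x - u with hv
  have hxuv : x = u + v := by rw [hv]; ring
  have hmu : memC U p u := by
    intro J hJ
    rw [hu] at hJ
    by_cases h : U J
    · simp only [if_pos h] at hJ
      exact ⟨(hx J hJ).1, h⟩
    · simp [if_neg h] at hJ
  have hmv : memC V p v := by
    intro J hJ
    have hxJ : x J ≠ 0 ∧ ¬ U J := by
      by_cases h : U J
      · exfalso; apply hJ; rw [hv, hu]; simp [if_pos h]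
      · constructor
        · intro h0; apply hJ; rw [hv, hu]; simp [if_neg h, h0]
        · exact h
    obtain ⟨h1, h2⟩ := hxJ
    obtain ⟨hc, hs⟩ := hx J h1
    exact ⟨hc, hs.resolve_left h2⟩
  rcases p with _ | q
  · -- p = 0
    have hdu : koszulD u = 0 := koszulD_memC_zero hmu
    have hdv : koszulD v = 0 := koszulD_memC_zero hmv
    obtain ⟨a, hma, hda⟩ := heU 0 u hmu hdu
    obtain ⟨b, hmb, hdb⟩ := heV 0 v hmv hdv
    refine ⟨a + b, ?_, by rw [map_add, hda, hdb, hxuv]⟩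
    exact memC_add (memC_mono (fun J h => Or.inl h) hma) (memC_mono (fun J h => Or.inr h) hmb)
  · -- p = q + 1
    have hdu : memC U q (koszulD u) := koszulD_memC hU hmu
    have hduv : koszulD u = -koszulD v := by
      have h0 : koszulD u + koszulD v = 0 := by rw [← map_add, ← hxuv, hdx]
      exact eq_neg_of_add_eq_zero_left h0
    have hdvV : memC V q (koszulD v) := koszulD_memC hV hmv
    have hduV : memC V q (koszulD u) := by
      rw [hduv]; exact fun J hJ => hdvV J (by simpa using hJ)
    have hduI : memC (fun J => U J ∧ V J) q (koszulD u) :=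
      fun J hJ => ⟨(hdu J hJ).1, (hdu J hJ).2, (hduV J hJ).2⟩
    obtain ⟨w, hmw, hdw⟩ := heI q (koszulD u) hduI (koszulD_koszulD u)
    have hmuw : memC U (q + 1) (u - w) := memC_sub hmu (memC_mono (fun J h => h.1) hmw)
    have hcyc : koszulD (u - w) = 0 := by rw [map_sub, hdw, sub_self]
    obtain ⟨a, hma, hda⟩ := heU (q + 1) (u - w) hmuw hcyc
    have hmvw : memC V (q + 1) (v + w) := memC_add hmv (memC_mono (fun J h => h.2) hmw)
    have hcyc' : koszulD (v + w) = 0 := by rw [map_add, hdw, hduv, add_neg_cancel]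
    obtain ⟨b, hmb, hdb⟩ := heV (q + 1) (v + w) hmvw hcyc'
    refine ⟨a + b, memC_add (memC_mono (fun J h => Or.inl h) hma)
      (memC_mono (fun J h => Or.inr h) hmb), ?_⟩
    rw [map_add, hda, hdb, hxuv]
    ring

lemma sweep_core (S : ℝ → Finset I → Prop) (M : ℝ)
    (hIcc : ∀ t J, S t J → t ∈ Set.Icc 0 M)
    (hclosed : ∀ J, IsClosed {t | S t J})
    (hconv : ∀ J, Convex ℝ {t | S t J})
    (hdc : ∀ t, DownClosed (S t))
    (hex : ∀ t, ExactFam (S t)) :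
    ExactFam (fun J => ∃ t, S t J) := by
  classical
  set T : Finset I → Set ℝ := fun J => {t | S t J} with hT
  have hbdb : ∀ J, BddBelow (T J) := fun J => ⟨0, fun t ht => (hIcc t J ht).1⟩
  have hbda : ∀ J, BddAbove (T J) := fun J => ⟨M, fun t ht => (hIcc t J ht).2⟩
  set E : Finset ℝ := (Finset.univ.image fun J : Finset I => sInf (T J)) ∪
      (Finset.univ.image fun J : Finset I => sSup (T J)) with hE
  have hInfE : ∀ J : Finset I, sInf (T J) ∈ E := fun J =>
    Finset.mem_union_left _ (Finset.mem_image_of_mem _ (Finset.mem_univ J))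
  have hSupE : ∀ J : Finset I, sSup (T J) ∈ E := fun J =>
    Finset.mem_union_right _ (Finset.mem_image_of_mem _ (Finset.mem_univ J))
  have hEne : E.Nonempty := ⟨sInf (T ∅), hInfE ∅⟩
  have hInfMem : ∀ J, (T J).Nonempty → sInf (T J) ∈ T J := fun J hJ =>
    (hclosed J).csInf_mem hJ (hbdb J)
  have hSupMem : ∀ J, (T J).Nonempty → sSup (T J) ∈ T J := fun J hJ =>
    (hclosed J).csSup_mem hJ (hbda J)
  -- base-case helper
  have base : ∀ b ∈ E, E.filter (· < b) = ∅ → ExactFam (fun J => ∃ t ≤ b, S t J) := by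
    intro b _ hEb
    refine ExactFam_congr (fun J => ?_) (hex b)
    constructor
    · intro h; exact ⟨b, le_refl b, h⟩
    · rintro ⟨t, htb, hS⟩
      have hTne : (T J).Nonempty := ⟨t, hS⟩
      have hc1 : sInf (T J) ≤ b := le_trans (csInf_le (hbdb J) hS) htb
      have hc2 : ¬ sInf (T J) < b := by
        intro h
        have : sInf (T J) ∈ E.filter (· < b) := Finset.mem_filter.2 ⟨hInfE J, h⟩
        simp [hEb] at this
      have : sInf (T J) = b := le_antisymm hc1 (not_lt.1 hc2)
      exact this ▸ hInfMem J hTne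
  have key : ∀ k : ℕ, ∀ b ∈ E, (E.filter (· < b)).card ≤ k →
      ExactFam (fun J => ∃ t ≤ b, S t J) := by
    intro k
    induction k with
    | zero =>
      intro b hb hcard
      exact base b hb (Finset.card_eq_zero.1 (Nat.le_zero.1 hcard))
    | succ k ih =>
      intro b hb hcard
      by_cases hEb : E.filter (· < b) = ∅
      · exact base b hb hEb
      · have hne' : (E.filter (· < b)).Nonempty := Finset.nonempty_iff_ne_empty.2 hEb
        set e := (E.filter (· < b)).max' hne' with he
        have heMem : e ∈ E.filter (· < b) := Finset.max'_mem _ hne'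
        have heE : e ∈ E := (Finset.mem_filter.1 heMem).1
        have heb : e < b := (Finset.mem_filter.1 heMem).2
        have hcard' : (E.filter (· < e)).card ≤ k := by
          have hsub : E.filter (· < e) ⊆ (E.filter (· < b)).erase e := by
            intro v hv
            obtain ⟨hvE, hve⟩ := Finset.mem_filter.1 hv
            exact Finset.mem_erase.2 ⟨ne_of_lt hve, Finset.mem_filter.2 ⟨hvE, lt_trans hve heb⟩⟩
          have := Finset.card_le_card hsub
          rw [Finset.card_erase_of_mem heMem] at this
          omega
        have hUe := ih e heE hcard'
        set mid := (e + b) / 2 with hmid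
        have hemid : e < mid := by rw [hmid]; linarith
        have hmidb : mid < b := by rw [hmid]; linarith
        -- largest element of E below b is e: anything in E that is < b is ≤ e
        have hEgap : ∀ v ∈ E, v < b → v ≤ e :=
          fun v hv hvb => Finset.le_max' (E.filter (· < b)) v (Finset.mem_filter.2 ⟨hv, hvb⟩)
        have hIcap : ∀ J, ((∃ t ≤ e, S t J) ∧ S b J) ↔ S mid J := by
          intro J
          constructor
          · rintro ⟨⟨t, hte, hS⟩, hSb⟩
            exact (hconv J).ordConnected.out hS hSb ⟨by linarith, by linarith⟩
          · intro hSmid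
            have hTne : (T J).Nonempty := ⟨mid, hSmid⟩
            have hcE : sInf (T J) ≤ e := by
              refine hEgap _ (hInfE J) ?_
              exact lt_of_le_of_lt (csInf_le (hbdb J) hSmid) hmidb
            have hsb : b ≤ sSup (T J) := by
              by_contra h
              push_neg at h
              have := hEgap _ (hSupE J) h
              have := le_csSup (hbda J) hSmid
              linarith
            refine ⟨⟨sInf (T J), hcE, hInfMem J hTne⟩, ?_⟩
            exact (hconv J).ordConnected.out hSmid (hSupMem J hTne) ⟨by linarith, hsb⟩
        have hIUnion : ∀ J, (∃ t ≤ b, S t J) ↔ ((∃ t ≤ e, S t J) ∨ S b J) := by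
          intro J
          constructor
          · rintro ⟨t, htb, hS⟩
            have hTne : (T J).Nonempty := ⟨t, hS⟩
            by_cases h : sInf (T J) ≤ e
            · exact Or.inl ⟨sInf (T J), h, hInfMem J hTne⟩
            · right
              have h1 : sInf (T J) ≤ b := le_trans (csInf_le (hbdb J) hS) htb
              have h2 : ¬ sInf (T J) < b := fun hlt => h (hEgap _ (hInfE J) hlt)
              have : sInf (T J) = b := le_antisymm h1 (not_lt.1 h2)
              exact this ▸ hInfMem J hTne
          · rintro (⟨t, hte, hS⟩ | hSb)
            · exact ⟨t, le_trans hte heb.le, hS⟩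
            · exact ⟨b, le_refl b, hSb⟩
        have hdcU : DownClosed (fun J => ∃ t ≤ e, S t J) := by
          rintro J K hJK ⟨t, hte, hS⟩
          exact ⟨t, hte, hdc t hJK hS⟩
        have hMV := mayer_vietoris hdcU (hdc b) hUe (hex b)
          (ExactFam_congr (fun J => (hIcap J).symm) (hex mid))
        exact ExactFam_congr (fun J => (hIUnion J).symm) hMV
  have hfinal := key E.card (E.max' hEne) (Finset.max'_mem _ hEne) (Finset.card_filter_le _ _)
  refine ExactFam_congr (fun J => ?_) hfinal
  constructor
  · rintro ⟨t, _, hS⟩; exact ⟨t, hS⟩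
  · rintro ⟨t, hS⟩
    exact ⟨sInf (T J), Finset.le_max' _ _ (hInfE J), hInfMem J ⟨t, hS⟩⟩

lemma sweep (S : ℝ → Finset I → Prop)
    (h0 : ∀ t J, S t J → 0 ≤ t)
    (hclosed : ∀ J, IsClosed {t | S t J})
    (hconv : ∀ J, Convex ℝ {t | S t J})
    (hdc : ∀ t, DownClosed (S t))
    (hex : ∀ t, ExactFam (S t)) :
    ExactFam (fun J => ∃ t, S t J) := by
  classical
  set E₀ : Finset ℝ := Finset.univ.image fun J : Finset I => sInf {t | S t J} with hE₀
  have hE₀ne : E₀.Nonempty := ⟨sInf {t | S t ∅}, Finset.mem_image_of_mem _ (Finset.mem_univ ∅)⟩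
  set M := E₀.max' hE₀ne with hM
  set S' : ℝ → Finset I → Prop := fun t J => S t J ∧ t ≤ M with hS'
  have hbdb : ∀ J, BddBelow {t | S t J} := fun J => ⟨0, fun t ht => h0 t J ht⟩
  have hcore := sweep_core S' M
    (fun t J ht => ⟨h0 t J ht.1, ht.2⟩)
    (fun J => by
      have : {t | S' t J} = {t | S t J} ∩ Set.Iic M := rfl
      rw [this]; exact (hclosed J).inter isClosed_Iic)
    (fun J => by
      have : {t | S' t J} = {t | S t J} ∩ Set.Iic M := rfl
      rw [this]; exact (hconv J).inter (convex_Iic M))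
    (fun t J K hJK h => ⟨hdc t hJK h.1, h.2⟩)
    (fun t => by
      by_cases ht : t ≤ M
      · exact ExactFam_congr (fun J => by simp [hS', ht]) (hex t)
      · exact ExactFam_congr (fun J => by simp [hS', ht]) (ExactFam_empty (I := I)))
  refine ExactFam_congr (fun J => ?_) hcore
  constructor
  · rintro ⟨t, hS, _⟩; exact ⟨t, hS⟩
  · rintro ⟨t, hS⟩
    have hne : Set.Nonempty {t | S t J} := ⟨t, hS⟩
    have hmem : sInf {t | S t J} ∈ {t | S t J} := (hclosed J).csInf_mem hne (hbdb J)
    have : sInf {t | S t J} ≤ M := by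
      rw [hM]
      exact Finset.le_max' E₀ _
        (Finset.mem_image_of_mem (fun J : Finset I => sInf {t | S t J}) (Finset.mem_univ J))
    exact ⟨sInf {t | S t J}, hmem, this⟩

lemma FM1 {ι : Type*} (s : Finset ι) (f : ι → ℝ) (g : ι → ℝ) :
    (∃ v : ℝ, ∀ i ∈ s, 0 ≤ g i + f i * v) ↔
      ((∀ i ∈ s, f i = 0 → 0 ≤ g i) ∧
       (∀ i ∈ s, ∀ j ∈ s, 0 < f i → f j < 0 → 0 ≤ g i * (-f j) + g j * f i)) := by
  classical
  constructor
  · rintro ⟨v, hv⟩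
    constructor
    · intro i hi h0
      have := hv i hi
      rw [h0] at this
      linarith
    · intro i hi j hj hfi hfj
      have h1 : 0 ≤ (g i + f i * v) * (-f j) := mul_nonneg (hv i hi) (by linarith)
      have h2 : 0 ≤ (g j + f j * v) * f i := mul_nonneg (hv j hj) hfi.le
      nlinarith [h1, h2]
  · rintro ⟨hzero, hpair⟩
    set sp := s.filter (fun i => 0 < f i) with hsp
    set sn := s.filter (fun i => f i < 0) with hsn
    by_cases hspne : sp.Nonempty
    · set v := sp.sup' hspne (fun i => -g i / f i) with hval
      refine ⟨v, fun i hi => ?_⟩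
      rcases lt_trichotomy (f i) 0 with hneg | hzer | hpos
      · -- upper-bound constraint; use the pair condition with the attained sup
        obtain ⟨i₀, hi₀, hvi₀⟩ := Finset.exists_mem_eq_sup' hspne (fun i => -g i / f i)
        have hi₀s : i₀ ∈ s := (Finset.mem_filter.1 hi₀).1
        have hfi₀ : 0 < f i₀ := (Finset.mem_filter.1 hi₀).2
        have hp := hpair i₀ hi₀s i hi hfi₀ hneg
        have hveq : v = -g i₀ / f i₀ := by rw [hval, hvi₀]
        rw [hveq]
        have key : g i + f i * (-g i₀ / f i₀) = (g i₀ * (-f i) + g i * f i₀) / f i₀ := by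
          field_simp
          ring
        rw [key]
        exact div_nonneg hp hfi₀.le
      · have := hzero i hi hzer
        rw [hzer]; linarith
      · have hisp : i ∈ sp := Finset.mem_filter.2 ⟨hi, hpos⟩
        have : -g i / f i ≤ v := Finset.le_sup' (fun i => -g i / f i) hisp
        have h2 : -g i ≤ f i * v := by
          rw [div_le_iff₀ hpos] at this
          linarith
        linarith
    · -- no positive coefficients
      by_cases hsnne : sn.Nonempty
      · set v := sn.inf' hsnne (fun j => -g j / f j) with hval
        refine ⟨v, fun i hi => ?_⟩
        rcases lt_trichotomy (f i) 0 with hneg | hzer | hpos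
        · have hisn : i ∈ sn := Finset.mem_filter.2 ⟨hi, hneg⟩
          have hle : v ≤ -g i / f i := Finset.inf'_le _ hisn
          have : f i * (-g i / f i) ≤ f i * v := mul_le_mul_of_nonpos_left hle hneg.le
          have hne : f i ≠ 0 := ne_of_lt hneg
          have heq : f i * (-g i / f i) = -g i := by
            field_simp
          linarith
        · have := hzero i hi hzer
          rw [hzer]; linarith
        · exact absurd (⟨i, Finset.mem_filter.2 ⟨hi, hpos⟩⟩ : sp.Nonempty) hspne
      · refine ⟨0, fun i hi => ?_⟩
        have hf0 : f i = 0 := by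
          rcases lt_trichotomy (f i) 0 with h | h | h
          · exact absurd (⟨i, Finset.mem_filter.2 ⟨hi, h⟩⟩ : sn.Nonempty) hsnne
          · exact h
          · exact absurd (⟨i, Finset.mem_filter.2 ⟨hi, h⟩⟩ : sp.Nonempty) hspne
        have := hzero i hi hf0
        rw [hf0]; linarith

lemma elim_closed (n : ℕ) : ∀ {ι : Type} (s : Finset ι) (c : ι → Fin n → ℝ)
    (d : ι → ℝ → ℝ), (∀ i, Continuous (d i)) →
    IsClosed {t : ℝ | ∃ u : Fin n → ℝ, ∀ i ∈ s, 0 ≤ d i t + ∑ k, c i k * u k} := by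
  induction n with
  | zero =>
    intro ι s c d hd
    have hset : {t : ℝ | ∃ u : Fin 0 → ℝ, ∀ i ∈ s, 0 ≤ d i t + ∑ k, c i k * u k}
        = ⋂ i ∈ s, {t : ℝ | 0 ≤ d i t} := by
      ext t
      simp only [Set.mem_setOf_eq, Set.mem_iInter]
      constructor
      · rintro ⟨u, hu⟩ i hi
        simpa using hu i hi
      · intro h
        exact ⟨fun k => k.elim0, fun i hi => by simpa using h i hi⟩
    rw [hset]
    exact isClosed_biInter fun i _ => IsClosed.preimage (hd i) isClosed_Ici
  | succ n ih =>
    intro ι s c d hd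
    classical
    set cl : ι → ℝ := fun i => c i (Fin.last n) with hcl
    set c' : ι → Fin n → ℝ := fun i k => c i k.castSucc with hc'
    set s' : Finset (ι ⊕ ι × ι) :=
      s.map ⟨Sum.inl, Sum.inl_injective⟩ ∪ (s ×ˢ s).map ⟨Sum.inr, Sum.inr_injective⟩ with hs'
    set c'' : ι ⊕ ι × ι → Fin n → ℝ := fun i' =>
      match i' with
      | .inl i => if cl i = 0 then (fun k => c' i k) else 0
      | .inr (i, j) => if 0 < cl i ∧ cl j < 0 then
          (fun k => c' i k * (-cl j) + c' j k * cl i) else 0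
      with hc''
    set d'' : ι ⊕ ι × ι → ℝ → ℝ := fun i' =>
      match i' with
      | .inl i => if cl i = 0 then d i else 0
      | .inr (i, j) => if 0 < cl i ∧ cl j < 0 then
          (fun t => d i t * (-cl j) + d j t * cl i) else 0
      with hd''
    have hcont : ∀ i', Continuous (d'' i') := by
      rintro (i | ⟨i, j⟩)
      · show Continuous (if cl i = 0 then d i else 0)
        split_ifs
        · exact hd i
        · exact continuous_const
      · show Continuous (if 0 < cl i ∧ cl j < 0 then
            (fun t => d i t * (-cl j) + d j t * cl i) else 0)
        split_ifs
        · exact ((hd i).mul continuous_const).add ((hd j).mul continuous_const)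
        · exact continuous_const
    have hset : {t : ℝ | ∃ u : Fin (n + 1) → ℝ, ∀ i ∈ s, 0 ≤ d i t + ∑ k, c i k * u k}
        = {t : ℝ | ∃ u' : Fin n → ℝ, ∀ i' ∈ s', 0 ≤ d'' i' t + ∑ k, c'' i' k * u' k} := by
      ext t
      simp only [Set.mem_setOf_eq]
      have step1 : (∃ u : Fin (n + 1) → ℝ, ∀ i ∈ s, 0 ≤ d i t + ∑ k, c i k * u k)
          ↔ ∃ u' : Fin n → ℝ, ∃ v : ℝ,
              ∀ i ∈ s, 0 ≤ (d i t + ∑ k, c' i k * u' k) + cl i * v := by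
        constructor
        · rintro ⟨u, hu⟩
          refine ⟨fun k => u k.castSucc, u (Fin.last n), fun i hi => ?_⟩
          have := hu i hi
          rw [Fin.sum_univ_castSucc] at this
          linarith [this]
        · rintro ⟨u', v, hu⟩
          refine ⟨Fin.snoc u' v, fun i hi => ?_⟩
          have := hu i hi
          rw [Fin.sum_univ_castSucc]
          simp only [Fin.snoc_castSucc, Fin.snoc_last]
          linarith [this]
      rw [step1]
      constructor
      · rintro ⟨u', v, hu⟩
        refine ⟨u', ?_⟩
        obtain ⟨hzero, hpair⟩ := (FM1 s cl (fun i => d i t + ∑ k, c' i k * u' k)).1 ⟨v, hu⟩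
        intro i' hi'
        rw [hs', Finset.mem_union] at hi'
        rcases hi' with h | h
        · obtain ⟨i, hi, rfl⟩ := Finset.mem_map.1 h
          by_cases h0 : cl i = 0
          · simpa [hc'', hd'', h0] using hzero i hi h0
          · simp [hc'', hd'', h0]
        · obtain ⟨⟨i, j⟩, hij, rfl⟩ := Finset.mem_map.1 h
          obtain ⟨hi, hj⟩ := Finset.mem_product.1 hij
          by_cases h0 : 0 < cl i ∧ cl j < 0
          · have hp := hpair i hi j hj h0.1 h0.2
            have hkey : ∑ k, (c' i k * (-cl j) + c' j k * cl i) * u' k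
                = (∑ k, c' i k * u' k) * (-cl j) + (∑ k, c' j k * u' k) * cl i := by
              rw [Finset.sum_mul, Finset.sum_mul, ← Finset.sum_add_distrib]
              exact Finset.sum_congr rfl fun k _ => by ring
            simp only [hc'', hd'', Function.Embedding.coeFn_mk, if_pos h0]
            rw [hkey]
            nlinarith [hp]
          · simp [hc'', hd'', h0]
      · rintro ⟨u', hu⟩
        refine ⟨u', ?_⟩
        rw [FM1 s cl (fun i => d i t + ∑ k, c' i k * u' k)]
        constructor
        · intro i hi h0
          have hmem : (Sum.inl i : ι ⊕ ι × ι) ∈ s' := by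
            rw [hs', Finset.mem_union]
            exact Or.inl (Finset.mem_map.2 ⟨i, hi, rfl⟩)
          have := hu _ hmem
          simpa [hc'', hd'', h0] using this
        · intro i hi j hj hpi hpj
          have hmem : (Sum.inr (i, j) : ι ⊕ ι × ι) ∈ s' := by
            rw [hs', Finset.mem_union]
            exact Or.inr (Finset.mem_map.2 ⟨(i, j), Finset.mem_product.2 ⟨hi, hj⟩, rfl⟩)
          have h0 : 0 < cl i ∧ cl j < 0 := ⟨hpi, hpj⟩
          have := hu _ hmem
          simp only [hc'', hd'', if_pos h0] at this
          have hkey : ∑ k, (c' i k * (-cl j) + c' j k * cl i) * u' k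
              = (∑ k, c' i k * u' k) * (-cl j) + (∑ k, c' j k * u' k) * cl i := by
            rw [Finset.sum_mul, Finset.sum_mul, ← Finset.sum_add_distrib]
            exact Finset.sum_congr rfl fun k _ => by ring
          rw [hkey] at this
          nlinarith [this]
    rw [hset]
    exact ih s' c'' d'' hcont

lemma IsPolyhedron.convex {r : ℕ} {A : Set (Fin r → ℝ)} (hA : IsPolyhedron A) :
    Convex ℝ A := by
  obtain ⟨H, rfl⟩ := hA
  intro x hx y hy a b ha hb hab
  intro h hh
  have hsum : ∑ k, (a • x + b • y) k * h.1 k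
      = a * ∑ k, x k * h.1 k + b * ∑ k, y k * h.1 k := by
    rw [Finset.mul_sum, Finset.mul_sum, ← Finset.sum_add_distrib]
    exact Finset.sum_congr rfl fun k _ => by
      simp [Pi.add_apply, Pi.smul_apply, smul_eq_mul]; ring
  have h1 := mul_le_mul_of_nonneg_left (hx h hh) ha
  have h2 := mul_le_mul_of_nonneg_left (hy h hh) hb
  show h.2 ≤ ∑ k, (a • x + b • y) k * h.1 k
  rw [hsum]
  have h3 : a * h.2 + b * h.2 = h.2 := by rw [← add_mul, hab, one_mul]
  linarith [h1, h2, h3]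

lemma realCone_convex {r : ℕ} (G : Finset (Fin r → ℝ)) : Convex ℝ (realCone G) := by
  rintro x ⟨c1, hc1, rfl⟩ y ⟨c2, hc2, rfl⟩ a b ha hb hab
  refine ⟨fun g => a * c1 g + b * c2 g,
    fun g => add_nonneg (mul_nonneg ha (hc1 g)) (mul_nonneg hb (hc2 g)), ?_⟩
  rw [Finset.smul_sum, Finset.smul_sum, ← Finset.sum_add_distrib]
  exact Finset.sum_congr rfl fun g _ => by rw [smul_smul, smul_smul, ← add_smul]

lemma realCone_iff_fin {r : ℕ} (G : Finset (Fin r → ℝ)) (x : Fin r → ℝ) :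
    x ∈ realCone G ↔ ∃ u : Fin G.card → ℝ, (∀ k, 0 ≤ u k) ∧
      x = ∑ k, u k • (G.equivFin.symm k : Fin r → ℝ) := by
  classical
  constructor
  · rintro ⟨c, hc, rfl⟩
    refine ⟨fun k => c (G.equivFin.symm k : Fin r → ℝ), fun k => hc _, ?_⟩
    have h1 : ∑ g ∈ G, c g • g = ∑ a ∈ G.attach, c (a : Fin r → ℝ) • (a : Fin r → ℝ) :=
      (Finset.sum_attach G (fun g => c g • g)).symm
    have h2 : ∑ a ∈ G.attach, c (a : Fin r → ℝ) • (a : Fin r → ℝ)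
        = ∑ k : Fin G.card, c (G.equivFin.symm k : Fin r → ℝ) • (G.equivFin.symm k : Fin r → ℝ) := by
      rw [← Finset.univ_eq_attach]
      exact (Equiv.sum_comp G.equivFin.symm
        (fun a : {x // x ∈ G} => c (a : Fin r → ℝ) • (a : Fin r → ℝ))).symm
    rw [h1, h2]
  · rintro ⟨u, hu, rfl⟩
    refine ⟨fun v => if h : v ∈ G then u (G.equivFin ⟨v, h⟩) else 0,
      fun v => by
        show 0 ≤ if h : v ∈ G then u (G.equivFin ⟨v, h⟩) else 0
        by_cases hvg : v ∈ G
        · rw [dif_pos hvg]; exact hu _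
        · rw [dif_neg hvg], ?_⟩
    have h1 : ∑ g ∈ G, (if h : g ∈ G then u (G.equivFin ⟨g, h⟩) else 0) • g
        = ∑ a ∈ G.attach, u (G.equivFin a) • (a : Fin r → ℝ) := by
      rw [← Finset.sum_attach G (fun g => (if h : g ∈ G then u (G.equivFin ⟨g, h⟩) else 0) • g)]
      exact Finset.sum_congr rfl fun a _ => by rw [dif_pos a.2]
    have h2 : ∑ a ∈ G.attach, u (G.equivFin a) • (a : Fin r → ℝ)
        = ∑ k : Fin G.card, u k • (G.equivFin.symm k : Fin r → ℝ) := by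
      rw [← Finset.univ_eq_attach]
      refine Eq.trans ?_ (Equiv.sum_comp G.equivFin
        (fun k : Fin G.card => u k • (G.equivFin.symm k : Fin r → ℝ)))
      exact Finset.sum_congr rfl fun a _ => by rw [Equiv.symm_apply_apply]
    rw [h1, h2]

lemma slice_closed {r : ℕ} {P : Set (Fin r → ℝ)} (hP : IsPolyhedron P)
    (G : Finset (Fin r → ℝ)) (m g : Fin r → ℝ) :
    IsClosed {t : ℝ | 0 ≤ t ∧ m - t • g ∈ P + realCone G} := by
  classical
  obtain ⟨H, hH⟩ := hP
  set n := G.card with hn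
  set w : Fin n → (Fin r → ℝ) := fun k => (G.equivFin.symm k : Fin r → ℝ) with hw
  set ι : Type := ((Fin r → ℝ) × ℝ) ⊕ Fin n with hι
  set s : Finset ι := H.map ⟨Sum.inl, Sum.inl_injective⟩ ∪
    Finset.univ.map ⟨Sum.inr, Sum.inr_injective⟩ with hs
  set d : ι → ℝ → ℝ := fun i' =>
    match i' with
    | .inl h => fun t => ((∑ k', m k' * h.1 k') - h.2) - t * (∑ k', g k' * h.1 k')
    | .inr _ => fun _ => 0
    with hd
  set c : ι → Fin n → ℝ := fun i' =>
    match i' with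
    | .inl h => fun k => -(∑ k', w k k' * h.1 k')
    | .inr k0 => fun k => if k = k0 then 1 else 0
    with hc
  have hcont : ∀ i', Continuous (d i') := by
    rintro (h | k0)
    · show Continuous fun t => ((∑ k', m k' * h.1 k') - h.2) - t * (∑ k', g k' * h.1 k')
      exact continuous_const.sub (continuous_id.mul continuous_const)
    · exact continuous_const
  have hset : {t : ℝ | 0 ≤ t ∧ m - t • g ∈ P + realCone G}
      = Set.Ici 0 ∩ {t : ℝ | ∃ u : Fin n → ℝ, ∀ i ∈ s, 0 ≤ d i t + ∑ k, c i k * u k} := by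
    ext t
    simp only [Set.mem_setOf_eq, Set.mem_inter_iff, Set.mem_Ici]
    refine and_congr_right fun _ => ?_
    have hexp : ∀ (u : Fin n → ℝ) (h : (Fin r → ℝ) × ℝ),
        ∑ k', (m - t • g - ∑ k, u k • w k) k' * h.1 k'
        = (∑ k', m k' * h.1 k') - t * (∑ k', g k' * h.1 k')
          - ∑ k, u k * (∑ k', w k k' * h.1 k') := by
      intro u h
      have hterm : ∀ k', (m - t • g - ∑ k, u k • w k) k' * h.1 k'
          = m k' * h.1 k' - t * (g k' * h.1 k') - ∑ k, u k * (w k k' * h.1 k') := by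
        intro k'
        simp only [Pi.sub_apply, Pi.smul_apply, smul_eq_mul, Finset.sum_apply]
        rw [sub_mul, sub_mul, Finset.sum_mul]
        have : ∑ k, u k * w k k' * h.1 k' = ∑ k, u k * (w k k' * h.1 k') :=
          Finset.sum_congr rfl fun k _ => by ring
        rw [this]
        ring
      rw [Finset.sum_congr rfl fun k' _ => hterm k']
      rw [Finset.sum_sub_distrib, Finset.sum_sub_distrib, ← Finset.mul_sum]
      congr 1
      rw [Finset.sum_comm]
      exact Finset.sum_congr rfl fun k _ => by rw [← Finset.mul_sum]
    constructor
    · intro hmem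
      rw [Set.mem_add] at hmem
      obtain ⟨a, ha, cvec, hcv, hsum⟩ := hmem
      obtain ⟨u, hu, hcveq⟩ := (realCone_iff_fin G cvec).1 hcv
      refine ⟨u, ?_⟩
      rintro (h | k0) hi
      · have haP : a = m - t • g - ∑ k, u k • w k := by
          rw [← hsum, hcveq]; abel
        have := (hH ▸ ha) h (by
          have := Finset.mem_union.1 hi
          rcases this with h' | h'
          · obtain ⟨h0, hh0, he⟩ := Finset.mem_map.1 h'
            cases he
            exact hh0
          · obtain ⟨k0, _, he⟩ := Finset.mem_map.1 h'
            cases he)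
        rw [haP] at this
        rw [hexp u h] at this
        show 0 ≤ (((∑ k', m k' * h.1 k') - h.2) - t * (∑ k', g k' * h.1 k'))
          + ∑ k, -(∑ k', w k k' * h.1 k') * u k
        have hneg : ∑ k, -(∑ k', w k k' * h.1 k') * u k
            = -∑ k, u k * (∑ k', w k k' * h.1 k') := by
          rw [← Finset.sum_neg_distrib]
          exact Finset.sum_congr rfl fun k _ => by ring
        rw [hneg]
        linarith [this]
      · show 0 ≤ 0 + ∑ k, (if k = k0 then (1:ℝ) else 0) * u k
        rw [zero_add]
        have : ∑ k, (if k = k0 then (1:ℝ) else 0) * u k = u k0 := by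
          rw [Finset.sum_eq_single k0]
          · simp
          · intro b _ hb; simp [hb]
          · simp
        rw [this]
        exact hu k0
    · rintro ⟨u, hu⟩
      have hupos : ∀ k0, 0 ≤ u k0 := by
        intro k0
        have hmem : (Sum.inr k0 : ι) ∈ s :=
          Finset.mem_union_right _ (Finset.mem_map.2 ⟨k0, Finset.mem_univ _, rfl⟩)
        have := hu _ hmem
        have heq : d (Sum.inr k0) t + ∑ k, c (Sum.inr k0) k * u k = u k0 := by
          show (0:ℝ) + ∑ k, (if k = k0 then (1:ℝ) else 0) * u k = u k0
          rw [zero_add, Finset.sum_eq_single k0]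
          · simp
          · intro b _ hb; simp [hb]
          · simp
        rw [heq] at this
        exact this
      rw [Set.mem_add]
      refine ⟨m - t • g - ∑ k, u k • w k, ?_, ∑ k, u k • w k,
        (realCone_iff_fin G _).2 ⟨u, hupos, rfl⟩, by abel⟩
      rw [hH]
      intro h hh
      have hmem : (Sum.inl h : ι) ∈ s :=
        Finset.mem_union_left _ (Finset.mem_map.2 ⟨h, hh, rfl⟩)
      have := hu _ hmem
      have heq : d (Sum.inl h) t + ∑ k, c (Sum.inl h) k * u k
          = (∑ k', m k' * h.1 k') - h.2 - t * (∑ k', g k' * h.1 k')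
            - ∑ k, u k * (∑ k', w k k' * h.1 k') := by
        show (((∑ k', m k' * h.1 k') - h.2) - t * (∑ k', g k' * h.1 k'))
          + ∑ k, -(∑ k', w k k' * h.1 k') * u k = _
        have hneg : ∑ k, -(∑ k', w k k' * h.1 k') * u k
            = -∑ k, u k * (∑ k', w k k' * h.1 k') := by
          rw [← Finset.sum_neg_distrib]
          exact Finset.sum_congr rfl fun k _ => by ring
        rw [hneg]
        ring
      rw [heq] at this
      rw [hexp u h]
      linarith [this]
  rw [hset]
  exact isClosed_Ici.inter (elim_closed n s c d hcont)

lemma slice_convex {r : ℕ} {X : Set (Fin r → ℝ)} (hX : Convex ℝ X) (m g : Fin r → ℝ) :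
    Convex ℝ {t : ℝ | 0 ≤ t ∧ m - t • g ∈ X} := by
  rintro t1 ⟨ht1, h1⟩ t2 ⟨ht2, h2⟩ a b ha hb hab
  constructor
  · have : a • t1 + b • t2 = a * t1 + b * t2 := rfl
    rw [this]
    exact add_nonneg (mul_nonneg ha ht1) (mul_nonneg hb ht2)
  · have key : m - (a • t1 + b • t2) • g = a • (m - t1 • g) + b • (m - t2 • g) := by
      funext k
      simp only [Pi.add_apply, Pi.sub_apply, Pi.smul_apply, smul_eq_mul]
      linear_combination (-(m k)) * hab
    show m - (a • t1 + b • t2) • g ∈ X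
    rw [key]
    exact hX h1 h2 ha hb hab

lemma add_cone_empty {r : ℕ} (A : Set (Fin r → ℝ)) : A + realCone ∅ = A := by
  ext x
  rw [Set.mem_add]
  constructor
  · rintro ⟨a, ha, c, ⟨cf, _, hceq⟩, hsum⟩
    rw [Finset.sum_empty] at hceq
    rw [← hsum, hceq, add_zero]
    exact ha
  · intro hx
    exact ⟨x, hx, 0, ⟨fun _ => 0, fun _ => le_refl 0, by simp⟩, add_zero x⟩

lemma mem_add_cone_insert {r : ℕ} (A : Set (Fin r → ℝ)) {g : Fin r → ℝ}
    {G : Finset (Fin r → ℝ)} (hg : g ∉ G) (m : Fin r → ℝ) :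
    m ∈ A + realCone (insert g G) ↔ ∃ t : ℝ, 0 ≤ t ∧ m - t • g ∈ A + realCone G := by
  classical
  constructor
  · intro hmem
    rw [Set.mem_add] at hmem
    obtain ⟨a, ha, c, ⟨cf, hcf, hceq⟩, hsum⟩ := hmem
    refine ⟨cf g, hcf g, ?_⟩
    rw [Set.mem_add]
    refine ⟨a, ha, ∑ v ∈ G, cf v • v, ⟨cf, hcf, rfl⟩, ?_⟩
    rw [Finset.sum_insert hg] at hceq
    rw [← hsum, hceq]
    abel
  · rintro ⟨t, ht, hmem⟩
    rw [Set.mem_add] at hmem ⊢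
    obtain ⟨a, ha, c, ⟨cf, hcf, hceq⟩, hsum⟩ := hmem
    refine ⟨a, ha, t • g + c, ⟨fun v => if v = g then t else cf v, ?_, ?_⟩, ?_⟩
    · intro v
      show 0 ≤ if v = g then t else cf v
      split_ifs
      exacts [ht, hcf v]
    · rw [Finset.sum_insert hg]
      show t • g + c = (if g = g then t else cf g) • g + ∑ x ∈ G, (if x = g then t else cf x) • x
      rw [if_pos rfl, hceq]
      congr 1
      exact Finset.sum_congr rfl fun v hv => by
        rw [if_neg (by rintro rfl; exact hg hv)]
    · calc a + (t • g + c) = (a + c) + t • g := by abel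
        _ = (m - t • g) + t • g := by rw [hsum]
        _ = m := by abel

lemma main_aux {r : ℕ} (F : Finset I → Set (Fin r → ℝ))
    (hContra : ∀ A B : Finset I, A ⊆ B → F B ⊆ F A)
    (hPoly : ∀ J : Finset I, IsPolyhedron (F J))
    (hExact : ∀ m : Fin r → ℝ, ExactFam (fun J => m ∈ F J)) :
    ∀ (G : Finset (Fin r → ℝ)) (m : Fin r → ℝ),
      ExactFam (fun J => m ∈ F J + realCone G) := by
  intro G
  induction G using Finset.induction_on with
  | empty =>
    intro m
    refine ExactFam_congr (fun J => ?_) (hExact m)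
    rw [add_cone_empty]
  | @insert g G hg ih =>
    intro m
    have hsweep := sweep (fun t J => 0 ≤ t ∧ m - t • g ∈ F J + realCone G)
      (fun t J ht => ht.1)
      (fun J => slice_closed (hPoly J) G m g)
      (fun J => slice_convex ((hPoly J).convex.add (realCone_convex G)) m g)
      (fun t J K hJK h => ⟨h.1, Set.add_subset_add_right (hContra J K hJK) h.2⟩)
      (fun t => by
        by_cases ht : 0 ≤ t
        · exact ExactFam_congr (fun J => (and_iff_right ht).symm) (ih (m - t • g))
        · exact ExactFam_congr (fun J => ⟨False.elim, fun hS => ht hS.1⟩)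
            (ExactFam_empty (I := I)))
    exact ExactFam_congr (fun J => (mem_add_cone_insert (F J) hg m).symm) hsweep

/-- Proposition 7 of the paper.
Let `F` be a contravariant functor from subsets of the finite set `I` to polyhedra in
`ℝʳ` whose evaluation subcomplexes `C^F_•(m)` are exact for every `m ∈ ℝʳ`, and let
`C ⊆ ℝʳ` be the convex cone generated with nonnegative real coefficients by a finite set
`G` of vectors.  Then the functor `F^C(I') := F(I') + C` (Minkowski sum) has exact
evaluation subcomplexes `C^{F^C}_•(m)` for every `m ∈ ℝʳ`. -/
theorem evalExact_add_cone {r : ℕ} (F : Finset I → Set (Fin r → ℝ))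
    (hContra : ∀ A B : Finset I, A ⊆ B → F B ⊆ F A)
    (hPoly : ∀ J : Finset I, IsPolyhedron (F J))
    (hExact : ∀ m : Fin r → ℝ, evalExact F m)
    (G : Finset (Fin r → ℝ)) :
    ∀ m : Fin r → ℝ, evalExact (fun J => F J + realCone G) m := by
  intro m
  rw [evalExact_iff]
  exact main_aux F hContra hPoly (fun m' => evalExact_iff.1 (hExact m')) G m

end
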